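/- Assume C_R ⊆ m_R². For every integer k ≥ 1, one has m_S^k ⊆ x₁S if and only if m_R^k ⊆ x₁R + C_R. -/

import Mathlib

open PowerSeries
set_option synthInstance.maxHeartbeats 1000000
set_option maxHeartbeats 1000000

noncomputable section

def mxl {k : Type*} [Field k] (R : Subalgebra k (PowerSeries k)) : Ideal R :=
  RingHom.ker ((constantCoeff : PowerSeries k →+* k).comp R.val.toRingHom)

def condIdeal {k : Type*} [Field k] (R : Subalgebra k (PowerSeries k)) : Ideal R where
  carrier := {r : R | ∀ g : PowerSeries k, (r : PowerSeries k) * g ∈ R}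
  add_mem' := by
    intro a b ha hb g
    have := R.add_mem (ha g) (hb g)
    simpa [add_mul] using this
  zero_mem' := by
    intro g
    simpa using R.zero_mem
  smul_mem' := by
    intro c x hx g
    have h : ((c • x : R) : PowerSeries k) * g
        = (c : PowerSeries k) * ((x : PowerSeries k) * g) := by
      rw [smul_eq_mul, MulMemClass.coe_mul]
      ring
    rw [h]
    exact R.mul_mem c.2 (hx g)

/-- The reduced type `s(R) = dim_k (C_R + x₁R)/(x₁R)`, computed as the dimension of the
image of the conductor in `R/(x₁)`. -/
def redType {k : Type*} [Field k] (R : Subalgebra k (PowerSeries k)) (x1 : R) : ℕ :=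
  Module.finrank k (Submodule.restrictScalars k
    (Ideal.map (Ideal.Quotient.mk (Ideal.span {x1})) (condIdeal R)))

namespace Aux13

variable {k : Type*} [Field k]

/-! ### Pure power series helpers -/

lemma ps_dvd {f : PowerSeries k} {n : ℕ} (h : (n : ℕ∞) ≤ f.order) :
    ∃ g, f = (X : PowerSeries k) ^ n * g := by
  have : (X : PowerSeries k) ^ n ∣ f := by
    rw [PowerSeries.X_pow_dvd_iff]
    intro m hm
    exact PowerSeries.coeff_of_lt_order m (lt_of_lt_of_le (by exact_mod_cast hm) h)
  exact this

lemma ps_unit_factor {f : PowerSeries k} {n : ℕ} (h : f.order = (n : ℕ∞)) :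
    ∃ v : PowerSeries k, IsUnit v ∧ f = (X : PowerSeries k) ^ n * v := by
  obtain ⟨v, hv⟩ := ps_dvd (le_of_eq h.symm)
  refine ⟨v, ?_, hv⟩
  rw [PowerSeries.isUnit_iff_constantCoeff, isUnit_iff_ne_zero]
  have hco : (PowerSeries.coeff n) f ≠ 0 := (PowerSeries.order_eq_nat.mp h).1
  intro h0
  apply hco
  rw [hv]
  have := PowerSeries.coeff_X_pow_mul v n 0
  simpa [h0] using this

lemma ord_mul_ge {m n : ℕ} {f g : PowerSeries k}
    (hf : (m : ℕ∞) ≤ f.order) (hg : (n : ℕ∞) ≤ g.order) :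
    ((m + n : ℕ) : ℕ∞) ≤ (f * g).order := by
  rw [PowerSeries.order_mul]
  push_cast
  exact add_le_add hf hg

lemma enat_sub_le {c a : ℕ} {o : ℕ∞} (h : (c : ℕ∞) ≤ (a : ℕ∞) + o) :
    ((c - a : ℕ) : ℕ∞) ≤ o := by
  cases o with
  | top => simp
  | coe m =>
    have : (c : ℕ∞) ≤ ((a + m : ℕ) : ℕ∞) := by push_cast at h ⊢; exact h
    rw [Nat.cast_le] at this
    rw [Nat.cast_le]
    omega

/-! ### Membership lemmas for the given ideals -/

lemma mem_mxl {R : Subalgebra k (PowerSeries k)} {f : R} :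
    f ∈ mxl R ↔ constantCoeff (f : PowerSeries k) = 0 := by
  rw [mxl, RingHom.mem_ker]; rfl

lemma mem_cond {R : Subalgebra k (PowerSeries k)} {f : R} :
    f ∈ condIdeal R ↔ ∀ g, (f : PowerSeries k) * g ∈ R := Iff.rfl

/-! ### The conductor as a subset of the power series ring -/

variable (R : Subalgebra k (PowerSeries k))

def Cset : Set (PowerSeries k) := {f | ∀ g, f * g ∈ R}

lemma Cset_subset {f : PowerSeries k} (hf : f ∈ Cset R) : f ∈ R := by
  simpa using hf 1

lemma Cset_mul {f : PowerSeries k} (hf : f ∈ Cset R) (u : PowerSeries k) :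
    f * u ∈ Cset R := by
  intro g
  rw [mul_assoc]
  exact hf (u * g)

lemma Cset_add {f g : PowerSeries k} (hf : f ∈ Cset R) (hg : g ∈ Cset R) :
    f + g ∈ Cset R := by
  intro u
  rw [add_mul]
  exact R.add_mem (hf u) (hg u)

variable {R}

variable (hex : ∃ n : ℕ, (X : PowerSeries k) ^ n ∈ Cset R)

open scoped Classical in
/-- The conductor exponent. -/
def c0 : ℕ := Nat.find hex

lemma c0_mem : (X : PowerSeries k) ^ (c0 hex) ∈ Cset R := by
  classical exact Nat.find_spec hex

lemma mem_Cset_of_order {f : PowerSeries k} (h : ((c0 hex : ℕ) : ℕ∞) ≤ f.order) :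
    f ∈ Cset R := by
  obtain ⟨g, rfl⟩ := ps_dvd h
  exact Cset_mul R (c0_mem hex) g

lemma order_of_mem_Cset {f : PowerSeries k} (hf : f ∈ Cset R) :
    ((c0 hex : ℕ) : ℕ∞) ≤ f.order := by
  by_cases h0 : f = 0
  · simp [h0, PowerSeries.order_eq_top.mpr rfl]
  · have hord : f.order ≠ ⊤ := fun h => h0 (PowerSeries.order_eq_top.mp h)
    obtain ⟨m, hm⟩ : ∃ m : ℕ, f.order = (m : ℕ∞) := by
      cases hfo : f.order with
      | top => exact absurd hfo hord
      | coe m => exact ⟨m, rfl⟩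
    rw [hm, Nat.cast_le]
    by_contra hlt
    push_neg at hlt
    obtain ⟨v, hv, hfv⟩ := ps_unit_factor hm
    obtain ⟨u, hu⟩ := hv
    have hXm : (X : PowerSeries k) ^ m ∈ Cset R := by
      have : f * (↑u⁻¹) = (X : PowerSeries k) ^ m := by
        rw [hfv, ← hu, mul_assoc, Units.mul_inv, mul_one]
      rw [← this]
      exact Cset_mul R hf _
    classical exact Nat.find_min hex hlt hXm

/-! ### Order bounds from the maximal ideal -/

variable {a1 : ℕ} {x1 : PowerSeries k}
variable (ha1min : ∀ f ∈ R, f ≠ 0 → (constantCoeff : PowerSeries k →+* k) f = 0 → (a1 : ℕ∞) ≤ f.order)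

include ha1min in
lemma ordm {f : PowerSeries k} (hf : f ∈ R) (hcc : constantCoeff f = 0) :
    (a1 : ℕ∞) ≤ f.order := by
  by_cases h0 : f = 0
  · simp [h0, PowerSeries.order_eq_top.mpr rfl]
  · exact ha1min f hf h0 hcc

include ha1min in
lemma pow_ord (K : ℕ) (f : R) (hf : f ∈ (mxl R) ^ K) :
    ((K * a1 : ℕ) : ℕ∞) ≤ (f : PowerSeries k).order := by
  induction K generalizing f with
  | zero => simp
  | succ K ih =>
    rw [pow_succ] at hf
    refine Submodule.mul_induction_on hf ?_ ?_
    · intro m hm n hn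
      have h1 := ih m hm
      have h2 := ordm ha1min n.2 (mem_mxl.mp hn)
      have hco : ((m * n : R) : PowerSeries k) = (m : PowerSeries k) * n := rfl
      rw [hco]
      calc (((K + 1) * a1 : ℕ) : ℕ∞) = ((K * a1 + a1 : ℕ) : ℕ∞) := by ring_nf
      _ ≤ _ := by
          rw [PowerSeries.order_mul]; push_cast
          exact add_le_add h1 h2
    · intro x y hx hy
      have hco : ((x + y : R) : PowerSeries k) = (x : PowerSeries k) + y := rfl
      rw [hco]
      exact le_trans (le_min hx hy) (PowerSeries.min_order_le_order_add _ _)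

variable (hC : condIdeal R ≤ (mxl R) ^ 2)

include ha1min hC in
lemma c0_ge : 2 * a1 ≤ c0 hex := by
  have hfR : (X : PowerSeries k) ^ (c0 hex) ∈ R := Cset_subset R (c0_mem hex)
  have hfc : (⟨(X : PowerSeries k) ^ (c0 hex), hfR⟩ : R) ∈ condIdeal R :=
    fun g => c0_mem hex g
  have := pow_ord ha1min 2 _ (hC hfc)
  rw [PowerSeries.order_X_pow] at this
  exact_mod_cast this

/-! ### The set D = C/x₁ -/

def Dset (R : Subalgebra k (PowerSeries k)) (x1 : PowerSeries k) : Set (PowerSeries k) :=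
  {h | ∀ g, x1 * h * g ∈ R}

lemma Dset_mul {d : PowerSeries k} (hd : d ∈ Dset R x1) (u : PowerSeries k) :
    d * u ∈ Dset R x1 := by
  intro g
  have : x1 * (d * u) * g = x1 * d * (u * g) := by ring
  rw [this]
  exact hd (u * g)

lemma Dset_add {d e : PowerSeries k} (hd : d ∈ Dset R x1) (he : e ∈ Dset R x1) :
    d + e ∈ Dset R x1 := by
  intro g
  have : x1 * (d + e) * g = x1 * d * g + x1 * e * g := by ring
  rw [this]
  exact R.add_mem (hd g) (he g)

lemma Dset_zero : (0 : PowerSeries k) ∈ Dset R x1 := by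
  intro g
  simpa using R.zero_mem

variable (hx1ord : x1.order = (a1 : ℕ∞))

lemma x1_mul_Dset_mem_Cset {d : PowerSeries k} (hd : d ∈ Dset R x1) :
    x1 * d ∈ Cset R := fun g => hd g

include hx1ord in
lemma order_of_mem_Dset {d : PowerSeries k} (hd : d ∈ Dset R x1) :
    ((c0 hex - a1 : ℕ) : ℕ∞) ≤ d.order := by
  have h1 : ((c0 hex : ℕ) : ℕ∞) ≤ (x1 * d).order :=
    order_of_mem_Cset hex (x1_mul_Dset_mem_Cset hd)
  rw [PowerSeries.order_mul, hx1ord] at h1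
  exact enat_sub_le h1

include hx1ord in
lemma mem_Dset_of_order (hac : a1 ≤ c0 hex) {d : PowerSeries k}
    (h : ((c0 hex - a1 : ℕ) : ℕ∞) ≤ d.order) : d ∈ Dset R x1 := by
  have hcd : x1 * d ∈ Cset R := by
    apply mem_Cset_of_order hex
    have := ord_mul_ge (m := a1) (n := c0 hex - a1) (le_of_eq hx1ord.symm) h
    rwa [Nat.add_sub_cancel' hac] at this
  intro g
  exact hcd g

include hx1ord in
lemma Cset_factor (hac : a1 ≤ c0 hex) {c : PowerSeries k} (hc : c ∈ Cset R) :
    ∃ d ∈ Dset R x1, c = x1 * d := by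
  obtain ⟨v, hv, hx1v⟩ := ps_unit_factor hx1ord
  obtain ⟨u, hu⟩ := hv
  have hcord : ((a1 : ℕ) : ℕ∞) ≤ c.order :=
    le_trans (by exact_mod_cast hac) (order_of_mem_Cset hex hc)
  obtain ⟨w, hw⟩ := ps_dvd hcord
  refine ⟨(↑u⁻¹ : PowerSeries k) * w, ?_, ?_⟩
  · intro g
    have : x1 * ((↑u⁻¹ : PowerSeries k) * w) * g = c * g := by
      rw [hx1v, ← hu, hw]
      have : (X : PowerSeries k) ^ a1 * ↑u * (↑u⁻¹ * w) * g
          = (X : PowerSeries k) ^ a1 * ((↑u * ↑u⁻¹) * w) * g := by ring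
      rw [this, Units.mul_inv, one_mul]
    rw [this]
    exact hc g
  · rw [hx1v, ← hu, hw]
    have : (X : PowerSeries k) ^ a1 * ↑u * (↑u⁻¹ * w)
        = (X : PowerSeries k) ^ a1 * ((↑u * ↑u⁻¹) * w) := by ring
    rw [this, Units.mul_inv, one_mul]


/-! ### The blow-up algebra S = R + D -/

variable {S : Subalgebra k (PowerSeries k)}
variable (hS : S = Algebra.adjoin k ((R : Set (PowerSeries k)) ∪
    {h : PowerSeries k | ∀ g : PowerSeries k, (x1 * h) * g ∈ R}))

include hS in
lemma mem_S_iff (f : PowerSeries k) :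
    f ∈ S ↔ ∃ r ∈ R, ∃ d ∈ Dset R x1, f = r + d := by
  have hD : {h : PowerSeries k | ∀ g : PowerSeries k, (x1 * h) * g ∈ R} = Dset R x1 := rfl
  constructor
  · intro hf
    let T : Subalgebra k (PowerSeries k) :=
      { carrier := {f | ∃ r ∈ R, ∃ d ∈ Dset R x1, f = r + d}
        mul_mem' := by
          rintro a b ⟨r, hr, d, hd, rfl⟩ ⟨r', hr', d', hd', rfl⟩
          refine ⟨r * r', R.mul_mem hr hr', r * d' + (d * r' + d * d'), ?_, by ring⟩
          refine Dset_add ?_ (Dset_add ?_ ?_)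
          · have : r * d' = d' * r := by ring
            rw [this]; exact Dset_mul hd' r
          · exact Dset_mul hd r'
          · exact Dset_mul hd d'
        one_mem' := ⟨1, R.one_mem, 0, Dset_zero, (add_zero 1).symm⟩
        add_mem' := by
          rintro a b ⟨r, hr, d, hd, rfl⟩ ⟨r', hr', d', hd', rfl⟩
          exact ⟨r + r', R.add_mem hr hr', d + d', Dset_add hd hd', by ring⟩
        zero_mem' := ⟨0, R.zero_mem, 0, Dset_zero, (add_zero 0).symm⟩
        algebraMap_mem' := fun a =>
          ⟨algebraMap k (PowerSeries k) a, R.algebraMap_mem a, 0, Dset_zero,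
            (add_zero _).symm⟩ }
    have hle : S ≤ T := by
      rw [hS]
      apply Algebra.adjoin_le
      rintro f (hfR | hfD)
      · exact ⟨f, hfR, 0, Dset_zero, (add_zero f).symm⟩
      · exact ⟨0, R.zero_mem, f, hfD, (zero_add f).symm⟩
    exact hle hf
  · rintro ⟨r, hr, d, hd, rfl⟩
    have hRS : (R : Set (PowerSeries k)) ⊆ S := by
      rw [hS]; exact fun y hy => Algebra.subset_adjoin (Or.inl hy)
    have hDS : Dset R x1 ⊆ (S : Set (PowerSeries k)) := by
      rw [hS]; exact fun y hy => Algebra.subset_adjoin (Or.inr hy)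
    exact S.add_mem (hRS hr) (hDS hd)

include hS hx1ord ha1min hC in
lemma mem_mxlS_decomp (hac : a1 ≤ c0 hex) (ha1pos : 0 < a1) {s : S} (hs : s ∈ mxl S) :
    ∃ r ∈ R, constantCoeff r = 0 ∧ ∃ d ∈ Dset R x1, (s : PowerSeries k) = r + d := by
  obtain ⟨r, hr, d, hd, hrd⟩ := (mem_S_iff hS (s : PowerSeries k)).mp s.2
  have hccd : constantCoeff d = 0 := by
    have hod := order_of_mem_Dset hex hx1ord hd
    have h2a : 2 * a1 ≤ c0 hex := c0_ge hex ha1min hC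
    have hpos : (0 : ℕ∞) < d.order := by
      refine lt_of_lt_of_le ?_ hod
      rw [← Nat.cast_zero, Nat.cast_lt]
      omega
    have := PowerSeries.coeff_of_lt_order 0 (by exact_mod_cast hpos)
    rwa [← PowerSeries.coeff_zero_eq_constantCoeff_apply]
  have hccs : constantCoeff (s : PowerSeries k) = 0 := mem_mxl.mp hs
  have hccr : constantCoeff r = 0 := by
    have := hccs
    rw [hrd, map_add, hccd, add_zero] at this
    exact this
  exact ⟨r, hr, hccr, d, hd, hrd⟩

/-! ### Forward direction -/

include hS in
lemma fwd (hx1R : x1 ∈ R) (hx1S : x1 ∈ S) (K : ℕ)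
    (hLHS : (mxl S) ^ K ≤ Ideal.span {(⟨x1, hx1S⟩ : S)}) :
    (mxl R) ^ K ≤ Ideal.span {(⟨x1, hx1R⟩ : R)} ⊔ condIdeal R := by
  intro f hf
  have hRS : R ≤ S := by
    rw [hS]; intro y hy; exact Algebra.subset_adjoin (Or.inl hy)
  set ι := Subalgebra.inclusion hRS with hι
  have hmxl : Ideal.map ι.toRingHom (mxl R) ≤ mxl S := by
    rw [Ideal.map_le_iff_le_comap]
    intro g hg
    show ι g ∈ mxl S
    rw [mem_mxl] at hg ⊢
    simpa [hι] using hg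
  have hpow : Ideal.map ι.toRingHom ((mxl R) ^ K) ≤ (mxl S) ^ K := by
    rw [Ideal.map_pow]
    exact Ideal.pow_right_mono hmxl K
  have hfS : ι f ∈ Ideal.span {(⟨x1, hx1S⟩ : S)} :=
    hLHS (hpow (Ideal.mem_map_of_mem _ hf))
  obtain ⟨s, hs⟩ := Ideal.mem_span_singleton.mp hfS
  have hfA : (f : PowerSeries k) = x1 * (s : PowerSeries k) := by
    have := congrArg (fun z : S => (z : PowerSeries k)) hs
    simpa [hι] using this
  obtain ⟨r, hr, d, hd, hsd⟩ := (mem_S_iff hS (s : PowerSeries k)).mp s.2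
  have hx1d : x1 * d ∈ R := by simpa using hd 1
  refine Submodule.mem_sup.mpr ⟨⟨x1 * r, R.mul_mem hx1R hr⟩, ?_, ⟨x1 * d, hx1d⟩, ?_, ?_⟩
  · exact Ideal.mem_span_singleton.mpr ⟨⟨r, hr⟩, rfl⟩
  · exact fun g => hd g
  · apply Subtype.ext
    show x1 * r + x1 * d = (f : PowerSeries k)
    rw [hfA, hsd]; ring

/-! ### Key decomposition of powers of m_S -/

include ha1min hC hx1ord hS in
lemma pow_decomp (hac : a1 ≤ c0 hex) (h2a : 2 * a1 ≤ c0 hex) (ha1pos : 0 < a1)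
    (K : ℕ) (hK : 2 ≤ K) :
    ∀ s : S, s ∈ (mxl S) ^ K →
      ∃ f ∈ (mxl R) ^ K, ∃ c ∈ Cset R, (s : PowerSeries k) = f + c := by
  induction K, hK using Nat.le_induction with
  | base =>
    intro s hs
    rw [pow_two] at hs
    refine Submodule.mul_induction_on hs ?_ ?_
    · intro a ha b hb
      obtain ⟨r, hrR, hccr, d, hd, hard⟩ := mem_mxlS_decomp hex ha1min hC hx1ord hS hac ha1pos ha
      obtain ⟨r', hrR', hccr', d', hd', hbrd⟩ := mem_mxlS_decomp hex ha1min hC hx1ord hS hac ha1pos hb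
      refine ⟨(⟨r, hrR⟩ : R) * ⟨r', hrR'⟩, ?_, r * d' + (d * r' + d * d'), ?_, ?_⟩
      · rw [pow_two]
        exact Ideal.mul_mem_mul (mem_mxl.mpr hccr) (mem_mxl.mpr hccr')
      · refine Cset_add R ?_ (Cset_add R ?_ ?_)
        · apply mem_Cset_of_order hex
          have := ord_mul_ge (m := a1) (n := c0 hex - a1)
            (ordm ha1min hrR hccr) (order_of_mem_Dset hex hx1ord hd')
          rwa [Nat.add_sub_cancel' hac] at this
        · apply mem_Cset_of_order hex
          have := ord_mul_ge (m := c0 hex - a1) (n := a1)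
            (order_of_mem_Dset hex hx1ord hd) (ordm ha1min hrR' hccr')
          rwa [Nat.sub_add_cancel hac] at this
        · apply mem_Cset_of_order hex
          refine le_trans ?_ (ord_mul_ge (m := c0 hex - a1) (n := c0 hex - a1)
            (order_of_mem_Dset hex hx1ord hd) (order_of_mem_Dset hex hx1ord hd'))
          rw [Nat.cast_le]
          omega
      · have : ((a * b : S) : PowerSeries k)
            = (a : PowerSeries k) * (b : PowerSeries k) := rfl
        rw [this, hard, hbrd]
        have hcoe : (((⟨r, hrR⟩ : R) * ⟨r', hrR'⟩ : R) : PowerSeries k) = r * r' := rfl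
        rw [hcoe]
        ring
    · rintro x y ⟨f, hf, c, hc, hx⟩ ⟨f', hf', c', hc', hy⟩
      refine ⟨f + f', add_mem hf hf', c + c', Cset_add R hc hc', ?_⟩
      have : ((x + y : S) : PowerSeries k)
          = (x : PowerSeries k) + (y : PowerSeries k) := rfl
      rw [this, hx, hy]
      push_cast
      ring
  | succ K hK ih =>
    intro s hs
    rw [pow_succ] at hs
    refine Submodule.mul_induction_on hs ?_ ?_
    · intro a ha b hb
      obtain ⟨f, hf, c, hc, hafc⟩ := ih a ha
      obtain ⟨r', hrR', hccr', d', hd', hbrd⟩ := mem_mxlS_decomp hex ha1min hC hx1ord hS hac ha1pos hb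
      refine ⟨f * ⟨r', hrR'⟩, ?_, f * d' + (c * r' + c * d'), ?_, ?_⟩
      · rw [pow_succ]
        exact Ideal.mul_mem_mul hf (mem_mxl.mpr hccr')
      · refine Cset_add R ?_ (Cset_add R ?_ ?_)
        · apply mem_Cset_of_order hex
          refine le_trans ?_ (ord_mul_ge (m := K * a1) (n := c0 hex - a1)
            (pow_ord ha1min K f hf) (order_of_mem_Dset hex hx1ord hd'))
          rw [Nat.cast_le]
          have h1 : a1 ≤ K * a1 := Nat.le_mul_of_pos_left a1 (by omega)
          omega
        · exact Cset_mul R hc r'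
        · exact Cset_mul R hc d'
      · have : ((a * b : S) : PowerSeries k)
            = (a : PowerSeries k) * (b : PowerSeries k) := rfl
        rw [this, hafc, hbrd]
        have hcoe : ((f * (⟨r', hrR'⟩ : R) : R) : PowerSeries k)
            = (f : PowerSeries k) * r' := rfl
        rw [hcoe]
        ring
    · rintro x y ⟨f, hf, c, hc, hx⟩ ⟨f', hf', c', hc', hy⟩
      refine ⟨f + f', add_mem hf hf', c + c', Cset_add R hc hc', ?_⟩
      have : ((x + y : S) : PowerSeries k)
          = (x : PowerSeries k) + (y : PowerSeries k) := rfl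
      rw [this, hx, hy]
      push_cast
      ring

include hex ha1min hC hx1ord hS in
lemma bwd (hx1R : x1 ∈ R) (hx1S : x1 ∈ S) (ha1pos : 0 < a1)
    (K : ℕ) (hK : 2 ≤ K)
    (hRHS : (mxl R) ^ K ≤ Ideal.span {(⟨x1, hx1R⟩ : R)} ⊔ condIdeal R) :
    (mxl S) ^ K ≤ Ideal.span {(⟨x1, hx1S⟩ : S)} := by
  have h2a : 2 * a1 ≤ c0 hex := c0_ge hex ha1min hC
  have hac : a1 ≤ c0 hex := by omega
  intro s hs
  obtain ⟨f, hf, c, hc, hsfc⟩ :=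
    pow_decomp hex ha1min hC hx1ord hS hac h2a ha1pos K hK s hs
  obtain ⟨p, hp, q, hq, hpq⟩ := Submodule.mem_sup.mp (hRHS hf)
  obtain ⟨r, hr⟩ := Ideal.mem_span_singleton.mp hp
  have hqc : (q : PowerSeries k) ∈ Cset R := fun g => hq g
  obtain ⟨d, hd, hqd⟩ := Cset_factor hex hx1ord hac (Cset_add R hqc hc)
  have hsx : (s : PowerSeries k) = x1 * ((r : PowerSeries k) + d) := by
    have h1 : (f : PowerSeries k) = (p : PowerSeries k) + q := by
      rw [← hpq]; rfl
    have h2 : (p : PowerSeries k) = x1 * (r : PowerSeries k) := by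
      rw [hr]; rfl
    calc (s : PowerSeries k) = (f : PowerSeries k) + c := hsfc
    _ = x1 * (r : PowerSeries k) + ((q : PowerSeries k) + c) := by rw [h1, h2]; ring
    _ = x1 * (r : PowerSeries k) + x1 * d := by rw [← hqd]
    _ = x1 * ((r : PowerSeries k) + d) := by ring
  have hRS : R ≤ S := by
    rw [hS]; intro y hy; exact Algebra.subset_adjoin (Or.inl hy)
  have hDS : Dset R x1 ⊆ (S : Set (PowerSeries k)) := by
    rw [hS]; exact fun y hy => Algebra.subset_adjoin (Or.inr hy)
  have hrdS : (r : PowerSeries k) + d ∈ S := S.add_mem (hRS r.2) (hDS hd)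
  exact Ideal.mem_span_singleton.mpr ⟨⟨(r : PowerSeries k) + d, hrdS⟩, Subtype.ext hsx⟩

/-! ### The case K = 1 : the hypothesis m_R ⊆ x₁R + C is contradictory -/

lemma ps_order_neg (f : PowerSeries k) : (-f).order = f.order := by
  have key : ∀ g : PowerSeries k, g.order ≤ (-g).order := by
    intro g
    apply PowerSeries.le_order
    intro i hi
    rw [map_neg, PowerSeries.coeff_of_lt_order i hi, neg_zero]
  refine le_antisymm ?_ (key f)
  have := key (-f)
  rwa [neg_neg] at this

include hx1ord in
lemma a1_ge_2 (hR : R ≠ ⊤)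
    (hNe : ∃ N : ℕ, 1 ≤ N ∧ ∀ g : PowerSeries k, (X : PowerSeries k) ^ N * g ∈ R)
    (ha1pos : 0 < a1) (hx1R : x1 ∈ R) : 2 ≤ a1 := by
  by_contra h
  have ha1 : a1 = 1 := by omega
  obtain ⟨N, hN1, hNg⟩ := hNe
  have hx1ord1 : x1.order = ((1 : ℕ) : ℕ∞) := by rw [hx1ord, ha1]
  obtain ⟨v, hv, hx1v⟩ := ps_unit_factor hx1ord1
  rw [pow_one] at hx1v
  have hccv : constantCoeff v ≠ 0 := by
    rw [PowerSeries.isUnit_iff_constantCoeff, isUnit_iff_ne_zero] at hv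
    exact hv
  have key : ∀ n : ℕ, ∀ f : PowerSeries k,
      ∃ r ∈ R, ∀ m < n, PowerSeries.coeff m (f - r) = 0 := by
    intro n
    induction n with
    | zero => exact fun f => ⟨0, R.zero_mem, fun m hm => absurd hm (Nat.not_lt_zero m)⟩
    | succ n ih =>
      intro f
      obtain ⟨r, hrR, hco⟩ := ih f
      set α := PowerSeries.coeff n (f - r) with hα
      set β := α / (constantCoeff v) ^ n with hβ
      have hCβ : (PowerSeries.C β) ∈ R := by
        have := R.algebraMap_mem β
        rwa [PowerSeries.algebraMap_apply, Algebra.algebraMap_self, RingHom.id_apply] at this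
      refine ⟨r + (PowerSeries.C β) * x1 ^ n,
        R.add_mem hrR (R.mul_mem hCβ (pow_mem hx1R n)), ?_⟩
      have hx1n : (PowerSeries.C β) * x1 ^ n
          = (X : PowerSeries k) ^ n * ((PowerSeries.C β) * v ^ n) := by
        rw [hx1v, mul_pow]; ring
      intro m hm
      have hfr : f - (r + (PowerSeries.C β) * x1 ^ n)
          = (f - r) - (PowerSeries.C β) * x1 ^ n := by ring
      rw [hfr, map_sub]
      rcases Nat.lt_succ_iff_lt_or_eq.mp hm with hlt | heq
      · rw [hco m hlt, hx1n]
        have hdvd : (X : PowerSeries k) ^ n ∣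
            (X : PowerSeries k) ^ n * ((PowerSeries.C β) * v ^ n) := dvd_mul_right _ _
        rw [PowerSeries.X_pow_dvd_iff.mp hdvd m hlt, sub_zero]
      · subst heq
        have hcoe : PowerSeries.coeff m ((PowerSeries.C β) * x1 ^ m)
            = β * (constantCoeff v) ^ m := by
          rw [hx1n]
          have h0m : PowerSeries.coeff (0 + m) ((X : PowerSeries k) ^ m *
              ((PowerSeries.C β) * v ^ m)) = PowerSeries.coeff 0 ((PowerSeries.C β) * v ^ m) :=
            PowerSeries.coeff_X_pow_mul _ m 0
          rw [zero_add] at h0m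
          rw [h0m, PowerSeries.coeff_zero_eq_constantCoeff_apply, map_mul,
            PowerSeries.constantCoeff_C, map_pow]
        rw [hcoe, hβ, div_mul_cancel₀ _ (pow_ne_zero m hccv), sub_self]
  have hRtop : R = ⊤ := by
    rw [eq_top_iff]
    intro f _
    obtain ⟨r, hrR, hco⟩ := key N f
    obtain ⟨g, hg⟩ := PowerSeries.X_pow_dvd_iff.mpr hco
    have : f = r + (X : PowerSeries k) ^ N * g := by rw [← hg]; ring
    rw [this]
    exact R.add_mem hrR (hNg g)
  exact hR hRtop

include hx1ord in
lemma cc_aeval (ha1pos : 0 < a1) (q : Polynomial k) :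
    constantCoeff (Polynomial.aeval x1 q) = q.coeff 0 := by
  have hccx1 : constantCoeff x1 = 0 := by
    rw [← PowerSeries.coeff_zero_eq_constantCoeff_apply]
    apply PowerSeries.coeff_of_lt_order
    rw [hx1ord, ← Nat.cast_zero, Nat.cast_lt]
    omega
  rw [Polynomial.aeval_def, Polynomial.hom_eval₂, hccx1, Polynomial.eval₂_at_zero]
  rw [RingHom.comp_apply, PowerSeries.algebraMap_apply, Algebra.algebraMap_self,
    RingHom.id_apply, PowerSeries.constantCoeff_C]

include hx1ord in
lemma ord_aeval (ha1pos : 0 < a1) :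
    ∀ q : Polynomial k, q ≠ 0 →
      ∃ i : ℕ, (Polynomial.aeval x1 q : PowerSeries k).order = ((i * a1 : ℕ) : ℕ∞) := by
  suffices H : ∀ n : ℕ, ∀ q : Polynomial k, q.natDegree ≤ n → q ≠ 0 →
      ∃ i : ℕ, (Polynomial.aeval x1 q : PowerSeries k).order = ((i * a1 : ℕ) : ℕ∞) by
    exact fun q hq => H q.natDegree q le_rfl hq
  intro n
  induction n with
  | zero =>
    intro q hdeg hq
    have hc0 : q.coeff 0 ≠ 0 := by
      intro hc
      apply hq
      have : q = Polynomial.C (q.coeff 0) := Polynomial.eq_C_of_natDegree_eq_zero (by omega)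
      rw [this, hc, map_zero]
    refine ⟨0, ?_⟩
    rw [zero_mul]
    rw [PowerSeries.order_eq_nat]
    constructor
    · rw [PowerSeries.coeff_zero_eq_constantCoeff_apply, cc_aeval hx1ord ha1pos]
      exact hc0
    · intro i hi
      exact absurd hi (Nat.not_lt_zero i)
  | succ n ih =>
    intro q hdeg hq
    by_cases hc0 : q.coeff 0 = 0
    · obtain ⟨q', hq'⟩ := Polynomial.X_dvd_iff.mpr hc0
      have hq'0 : q' ≠ 0 := by
        intro h0
        apply hq
        rw [hq', h0, mul_zero]
      have hdeg' : q'.natDegree ≤ n := by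
        have := Polynomial.Monic.natDegree_mul' Polynomial.monic_X hq'0
        rw [← hq'] at this
        rw [Polynomial.natDegree_X] at this
        omega
      obtain ⟨i, hi⟩ := ih q' hdeg' hq'0
      refine ⟨i + 1, ?_⟩
      rw [hq', map_mul, Polynomial.aeval_X, PowerSeries.order_mul, hx1ord, hi]
      push_cast
      ring
    · refine ⟨0, ?_⟩
      rw [zero_mul]
      rw [PowerSeries.order_eq_nat]
      constructor
      · rw [PowerSeries.coeff_zero_eq_constantCoeff_apply, cc_aeval hx1ord ha1pos]
        exact hc0
      · intro i hi
        exact absurd hi (Nat.not_lt_zero i)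

lemma Cset_zero : (0 : PowerSeries k) ∈ Cset R := by
  intro g
  simpa using R.zero_mem

include hx1ord in
lemma ord_x1_pow (n : ℕ) : (x1 ^ n).order = ((n * a1 : ℕ) : ℕ∞) := by
  induction n with
  | zero => simp [PowerSeries.order_one]
  | succ n ih =>
    rw [pow_succ, PowerSeries.order_mul, ih, hx1ord]
    push_cast
    ring

include hex hx1ord in
lemma polyApprox (ha1pos : 0 < a1) (hx1R : x1 ∈ R)
    (Hyp : mxl R ≤ Ideal.span {(⟨x1, hx1R⟩ : R)} ⊔ condIdeal R) :
    ∀ f ∈ R, constantCoeff f = 0 →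
      ∃ q : Polynomial k, q.coeff 0 = 0 ∧ f - Polynomial.aeval x1 q ∈ Cset R := by
  have hstep : ∀ f ∈ R, constantCoeff f = 0 →
      ∃ r ∈ R, ∃ c ∈ Cset R, f = x1 * r + c := by
    intro f hf hcc
    have hm : (⟨f, hf⟩ : R) ∈ mxl R := mem_mxl.mpr hcc
    obtain ⟨p, hp, qq, hqq, hpq⟩ := Submodule.mem_sup.mp (Hyp hm)
    obtain ⟨r, hr⟩ := Ideal.mem_span_singleton.mp hp
    refine ⟨(r : PowerSeries k), r.2, (qq : PowerSeries k), fun g => hqq g, ?_⟩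
    have hco := congrArg (fun z : R => (z : PowerSeries k)) hpq
    have hpA : (p : PowerSeries k) = x1 * (r : PowerSeries k) := by rw [hr]; rfl
    have : (p : PowerSeries k) + (qq : PowerSeries k) = f := hco
    rw [← this, hpA]
  have main : ∀ n : ℕ, ∀ f ∈ R, constantCoeff f = 0 →
      ∃ q : Polynomial k, q.coeff 0 = 0 ∧ ∃ g ∈ R, constantCoeff g = 0 ∧
        ∃ c ∈ Cset R, f = Polynomial.aeval x1 q + x1 ^ n * g + c := by
    intro n
    induction n with
    | zero =>
      intro f hf hcc
      exact ⟨0, by simp, f, hf, hcc, 0, Cset_zero, by simp⟩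
    | succ n ih =>
      intro f hf hcc
      obtain ⟨q, hq0, g, hgR, hgcc, c, hc, hfd⟩ := ih f hf hcc
      obtain ⟨r, hrR, c', hc', hgr⟩ := hstep g hgR hgcc
      set α := constantCoeff r with hα
      have hCα : (PowerSeries.C α) ∈ R := by
        have := R.algebraMap_mem α
        rwa [PowerSeries.algebraMap_apply, Algebra.algebraMap_self, RingHom.id_apply] at this
      have hmR : r - PowerSeries.C α ∈ R := R.sub_mem hrR hCα
      have hmcc : constantCoeff (r - PowerSeries.C α) = 0 := by
        rw [map_sub, PowerSeries.constantCoeff_C, hα, sub_self]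
      refine ⟨q + Polynomial.C α * Polynomial.X ^ (n + 1), ?_, r - PowerSeries.C α, hmR, hmcc,
        x1 ^ n * c' + c, ?_, ?_⟩
      · simp [hq0]
      · refine Cset_add R ?_ hc
        have := Cset_mul R hc' (x1 ^ n)
        rwa [mul_comm] at this
      · rw [hfd, hgr]
        rw [map_add, map_mul, Polynomial.aeval_C, Polynomial.aeval_X_pow]
        have halg : (algebraMap k (PowerSeries k)) α = PowerSeries.C α := by
          rw [PowerSeries.algebraMap_apply, Algebra.algebraMap_self, RingHom.id_apply]
        rw [halg]
        ring
  intro f hf hcc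
  obtain ⟨q, hq0, g, hgR, hgcc, c, hc, hfd⟩ := main (c0 hex) f hf hcc
  refine ⟨q, hq0, ?_⟩
  have hxg : x1 ^ (c0 hex) * g ∈ Cset R := by
    apply mem_Cset_of_order hex
    refine le_trans ?_ (ord_mul_ge (m := c0 hex * a1) (n := 0)
      (le_of_eq (ord_x1_pow hx1ord (c0 hex)).symm) (by simp))
    rw [Nat.cast_le]
    have : c0 hex * 1 ≤ c0 hex * a1 := Nat.mul_le_mul_left _ ha1pos
    omega
  have heq : f - Polynomial.aeval x1 q = x1 ^ (c0 hex) * g + c := by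
    rw [hfd]; ring
  rw [heq]
  exact Cset_add R hxg hc

include hex hx1ord ha1min hC in
lemma mulApprox (ha1pos : 0 < a1) (hx1R : x1 ∈ R)
    (Hyp : mxl R ≤ Ideal.span {(⟨x1, hx1R⟩ : R)} ⊔ condIdeal R) :
    ∀ f : R, f ∈ (mxl R) * (mxl R) →
      ∃ q : Polynomial k, q.coeff 0 = 0 ∧
        ((c0 hex + a1 : ℕ) : ℕ∞) ≤ ((f : PowerSeries k) - Polynomial.aeval x1 q).order := by
  have h2a : 2 * a1 ≤ c0 hex := c0_ge hex ha1min hC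
  have hac : a1 ≤ c0 hex := by omega
  have hordq : ∀ qq : Polynomial k, qq.coeff 0 = 0 →
      (a1 : ℕ∞) ≤ (Polynomial.aeval x1 qq : PowerSeries k).order := by
    intro qq h0
    obtain ⟨q', hq'⟩ := Polynomial.X_dvd_iff.mpr h0
    rw [hq', map_mul, Polynomial.aeval_X, PowerSeries.order_mul, hx1ord]
    exact le_self_add
  intro f hf
  refine Submodule.mul_induction_on hf ?_ ?_
  · intro m hm n hn
    obtain ⟨q1, hq10, hc1⟩ := polyApprox hex hx1ord ha1pos hx1R Hyp _ m.2 (mem_mxl.mp hm)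
    obtain ⟨q2, hq20, hc2⟩ := polyApprox hex hx1ord ha1pos hx1R Hyp _ n.2 (mem_mxl.mp hn)
    refine ⟨q1 * q2, by simp [hq10], ?_⟩
    have hrem : ((m * n : R) : PowerSeries k) - Polynomial.aeval x1 (q1 * q2)
        = (Polynomial.aeval x1 q1 : PowerSeries k) * ((n : PowerSeries k) - Polynomial.aeval x1 q2)
          + (((m : PowerSeries k) - Polynomial.aeval x1 q1) * Polynomial.aeval x1 q2
            + ((m : PowerSeries k) - Polynomial.aeval x1 q1)
              * ((n : PowerSeries k) - Polynomial.aeval x1 q2)) := by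
      have hco : ((m * n : R) : PowerSeries k)
          = (m : PowerSeries k) * (n : PowerSeries k) := rfl
      rw [hco, map_mul]
      ring
    rw [hrem]
    have h1 : ((a1 + c0 hex : ℕ) : ℕ∞) ≤ ((Polynomial.aeval x1 q1 : PowerSeries k)
        * ((n : PowerSeries k) - Polynomial.aeval x1 q2)).order :=
      ord_mul_ge (hordq q1 hq10) (order_of_mem_Cset hex hc2)
    have h2 : ((c0 hex + a1 : ℕ) : ℕ∞) ≤ ((((m : PowerSeries k) - Polynomial.aeval x1 q1))
        * (Polynomial.aeval x1 q2 : PowerSeries k)).order :=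
      ord_mul_ge (order_of_mem_Cset hex hc1) (hordq q2 hq20)
    have h3 : ((c0 hex + a1 : ℕ) : ℕ∞) ≤ ((((m : PowerSeries k) - Polynomial.aeval x1 q1))
        * ((n : PowerSeries k) - Polynomial.aeval x1 q2)).order := by
      refine le_trans ?_ (ord_mul_ge (order_of_mem_Cset hex hc1) (order_of_mem_Cset hex hc2))
      rw [Nat.cast_le]
      omega
    refine le_trans (le_min ?_ (le_trans (le_min h2 h3)
      (PowerSeries.min_order_le_order_add _ _))) (PowerSeries.min_order_le_order_add _ _)
    rw [Nat.add_comm a1 (c0 hex)] at h1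
    exact h1
  · rintro x y ⟨q, hq0, hord⟩ ⟨q', hq'0, hord'⟩
    refine ⟨q + q', by simp [hq0, hq'0], ?_⟩
    have heq : ((x + y : R) : PowerSeries k) - Polynomial.aeval x1 (q + q')
        = ((x : PowerSeries k) - Polynomial.aeval x1 q)
          + ((y : PowerSeries k) - Polynomial.aeval x1 q') := by
      have hco : ((x + y : R) : PowerSeries k)
          = (x : PowerSeries k) + (y : PowerSeries k) := rfl
      rw [hco, map_add]
      ring
    rw [heq]
    exact le_trans (le_min hord hord') (PowerSeries.min_order_le_order_add _ _)

include hex hx1ord ha1min hC in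
lemma k1false (hR : R ≠ ⊤)
    (hNe : ∃ N : ℕ, 1 ≤ N ∧ ∀ g : PowerSeries k, (X : PowerSeries k) ^ N * g ∈ R)
    (ha1pos : 0 < a1) (hx1R : x1 ∈ R)
    (Hyp : mxl R ≤ Ideal.span {(⟨x1, hx1R⟩ : R)} ⊔ condIdeal R) : False := by
  have ha2 : 2 ≤ a1 := a1_ge_2 hx1ord hR hNe ha1pos hx1R
  have key : ∀ e : ℕ, e < a1 → ∃ i : ℕ, c0 hex + e = i * a1 := by
    intro e he
    have hmem : (X : PowerSeries k) ^ (c0 hex + e) ∈ Cset R := by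
      apply mem_Cset_of_order hex
      rw [PowerSeries.order_X_pow]
      exact_mod_cast Nat.le_add_right _ _
    have hcond : (⟨(X : PowerSeries k) ^ (c0 hex + e), Cset_subset R hmem⟩ : R) ∈ condIdeal R :=
      fun g => hmem g
    have hsq : (⟨(X : PowerSeries k) ^ (c0 hex + e), Cset_subset R hmem⟩ : R)
        ∈ (mxl R) * (mxl R) := by
      rw [← pow_two]
      exact hC hcond
    obtain ⟨q, hq0, hord⟩ := mulApprox hex ha1min hC hx1ord ha1pos hx1R Hyp _ hsq
    set F := (X : PowerSeries k) ^ (c0 hex + e) with hF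
    have hFord : F.order = ((c0 hex + e : ℕ) : ℕ∞) := by
      rw [hF]
      exact_mod_cast PowerSeries.order_X_pow (R := k) (c0 hex + e)
    have hlt : ((c0 hex + e : ℕ) : ℕ∞) < (-(F - Polynomial.aeval x1 q)).order := by
      rw [ps_order_neg]
      refine lt_of_lt_of_le ?_ hord
      rw [Nat.cast_lt]
      omega
    have hsum : (Polynomial.aeval x1 q : PowerSeries k) = F + (-(F - Polynomial.aeval x1 q)) := by
      ring
    have horda : (Polynomial.aeval x1 q : PowerSeries k).order = ((c0 hex + e : ℕ) : ℕ∞) := by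
      have h1 := PowerSeries.order_add_of_order_ne F (-(F - Polynomial.aeval x1 q))
        (by rw [hFord, ps_order_neg]; intro hcon
            have := hlt
            rw [ps_order_neg] at this
            rw [← hcon] at this
            exact lt_irrefl _ this)
      rw [← hsum] at h1
      rw [h1, hFord]
      exact min_eq_left (le_of_lt hlt)
    have hqne : q ≠ 0 := by
      intro h0
      rw [h0, map_zero, PowerSeries.order_eq_top.mpr rfl] at horda
      exact (WithTop.coe_ne_top horda.symm)
    obtain ⟨i, hi⟩ := ord_aeval hx1ord ha1pos q hqne
    rw [horda] at hi
    exact ⟨i, by exact_mod_cast hi⟩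
  obtain ⟨i, hi0⟩ := key 0 (by omega)
  obtain ⟨j, hj1⟩ := key 1 (by omega)
  have hdvd1 : a1 ∣ c0 hex := ⟨i, by rw [← Nat.add_zero (c0 hex), hi0, Nat.mul_comm]⟩
  have hdvd2 : a1 ∣ c0 hex + 1 := ⟨j, by rw [hj1, Nat.mul_comm]⟩
  have hdvd : a1 ∣ 1 := by
    have := Nat.dvd_sub hdvd2 hdvd1
    rwa [Nat.add_sub_cancel_left] at this
  have := Nat.le_of_dvd one_pos hdvd
  omega

end Aux13

theorem stmt13 {k : Type*} [Field k] [IsAlgClosed k] [CharZero k]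
    (R : Subalgebra k (PowerSeries k)) (hR : R ≠ ⊤)
    (hN : ∃ N : ℕ, 1 ≤ N ∧ ∀ g : PowerSeries k, (X : PowerSeries k) ^ N * g ∈ R)
    (a1 : ℕ) (ha1pos : 0 < a1) (x1 : PowerSeries k) (hx1R : x1 ∈ R)
    (hx1ord : x1.order = a1)
    (ha1min : ∀ f ∈ R, f ≠ 0 → (constantCoeff : PowerSeries k →+* k) f = 0 → (a1 : ℕ∞) ≤ f.order)
    (hC : condIdeal R ≤ (mxl R) ^ 2)
    (S : Subalgebra k (PowerSeries k))
    (hS : S = Algebra.adjoin k ((R : Set (PowerSeries k)) ∪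
        {h : PowerSeries k | ∀ g : PowerSeries k, (x1 * h) * g ∈ R}))
    (hx1S : x1 ∈ S) :
    ∀ K : ℕ, 1 ≤ K →
      ((mxl S) ^ K ≤ Ideal.span {(⟨x1, hx1S⟩ : S)} ↔
        (mxl R) ^ K ≤ Ideal.span {(⟨x1, hx1R⟩ : R)} ⊔ condIdeal R) := by
  have hex : ∃ n : ℕ, (X : PowerSeries k) ^ n ∈ Aux13.Cset R := by
    obtain ⟨N, _, hNg⟩ := hN
    exact ⟨N, fun g => hNg g⟩
  intro K hK
  constructor
  · exact Aux13.fwd hS hx1R hx1S K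
  · intro hRHS
    rcases Nat.lt_or_ge K 2 with hK1 | hK2
    · have hKe : K = 1 := by omega
      subst hKe
      rw [pow_one] at hRHS
      exact absurd hRHS (fun h =>
        Aux13.k1false hex ha1min hC hx1ord hR hN ha1pos hx1R h)
    · exact Aux13.bwd hex ha1min hC hx1ord hS hx1R hx1S ha1pos K hK2 hRHS
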